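/- Let X₁, ..., X_k be i.i.d. Exp(1) random variables. Then max(X₁, ..., X_k) and X₁ + X₂/2 + ⋯ + X_k/k have the same distribution. -/

import Mathlib

open MeasureTheory ProbabilityTheory Real Set

lemma expMeasure_Iic {r : ℝ} (hr : 0 < r) (x : ℝ) :
    expMeasure r (Iic x) = ENNReal.ofReal (if 0 ≤ x then 1 - exp (-(r * x)) else 0) := by
  rw [expMeasure, gammaMeasure, withDensity_apply _ measurableSet_Iic]
  exact lintegral_exponentialPDF_eq_antiDeriv hr x

lemma iIndepFun_comp_emb {Ω ι ι' : Type*} [MeasurableSpace Ω] {μ : Measure Ω}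
    {f : ι → Ω → ℝ} (h : iIndepFun f μ)
    (g : ι' ↪ ι) :
    iIndepFun (fun i => f (g i)) μ := by
  classical
  rw [iIndepFun_iff_measure_inter_preimage_eq_mul] at h ⊢
  intro S sets hsets
  set sets' : ι → Set ℝ := fun j =>
    if h : ∃ i ∈ S, g i = j then sets h.choose else univ with hsets'def
  have key : ∀ i ∈ S, sets' (g i) = sets i := by
    intro i hi
    have hex : ∃ i' ∈ S, g i' = g i := ⟨i, hi, rfl⟩
    simp only [sets', dif_pos hex]
    obtain ⟨h1, h2⟩ := hex.choose_spec
    rw [g.injective h2]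
  have hmeas : ∀ j ∈ S.image g, MeasurableSet (sets' j) := by
    intro j hj
    simp only [Finset.mem_image] at hj
    obtain ⟨i, hi, rfl⟩ := hj
    rw [key i hi]; exact hsets i hi
  have := h (S.image g) hmeas
  rw [Finset.set_biInter_finset_image, Finset.prod_image
    (fun a _ b _ hab => g.injective hab)] at this
  calc μ (⋂ i ∈ S, f (g i) ⁻¹' sets i)
      = μ (⋂ i ∈ S, f (g i) ⁻¹' sets' (g i)) := by
        congr 1; exact iInter₂_congr fun i hi => by rw [key i hi]
    _ = ∏ i ∈ S, μ (f (g i) ⁻¹' sets' (g i)) := this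
    _ = ∏ i ∈ S, μ (f (g i) ⁻¹' sets i) :=
        Finset.prod_congr rfl fun i hi => by rw [key i hi]

lemma key_hasDerivAt (k : ℕ) (x z : ℝ) :
    HasDerivAt (fun z => -(exp (x - z/((k:ℝ)+1)) - 1)^(k+1) * exp (-(((k:ℝ)+1)*x)))
      (exp (-z) * (1 - exp (-(x - z/((k:ℝ)+1))))^k) z := by
  have hc0 : (0:ℝ) < (k:ℝ)+1 := by positivity
  have hu : HasDerivAt (fun z : ℝ => x - z/((k:ℝ)+1)) (-(1/((k:ℝ)+1))) z := by
    simpa using ((hasDerivAt_id z).div_const ((k:ℝ)+1)).const_sub x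
  have hv := (hu.exp.sub_const 1).fun_pow (k+1)
  have hH := (hv.fun_neg).mul_const (exp (-(((k:ℝ)+1)*x)))
  refine hH.congr_deriv (Eq.symm ?_)
  simp only [Nat.add_sub_cancel]
  push_cast
  have h1 : (1 - exp (-(x - z/((k:ℝ)+1)))) =
      exp (-(x - z/((k:ℝ)+1))) * (exp (x - z/((k:ℝ)+1)) - 1) := by
    rw [mul_sub, ← exp_add]; simp
  rw [h1, mul_pow, ← exp_nat_mul]
  have h2 : exp (-z) * exp ((k:ℝ) * -(x - z/((k:ℝ)+1))) =
      exp (x - z/((k:ℝ)+1)) * exp (-(((k:ℝ)+1)*x)) := by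
    rw [← exp_add, ← exp_add]
    congr 1
    field_simp
    ring
  have h4 : ((k:ℝ)+1) * (1/((k:ℝ)+1)) = 1 := mul_one_div_cancel hc0.ne'
  linear_combination (exp (x - z/((k:ℝ)+1)) - 1)^k * h2 -
    ((exp (x - z/((k:ℝ)+1)) - 1)^k * exp (x - z/((k:ℝ)+1)) * exp (-(((k:ℝ)+1)*x))) * h4

lemma key_integral (k : ℕ) {x : ℝ} (hx : 0 ≤ x) :
    ∫ z in (0)..(((k:ℝ)+1)*x), exp (-z) * (1 - exp (-(x - z/((k:ℝ)+1))))^k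
      = (1 - exp (-x))^(k+1) := by
  have hc0 : (0:ℝ) < (k:ℝ)+1 := by positivity
  have hcont : Continuous (fun z => exp (-z) * (1 - exp (-(x - z/((k:ℝ)+1))))^k) := by
    continuity
  rw [intervalIntegral.integral_eq_sub_of_hasDerivAt
    (fun z _ => key_hasDerivAt k x z) (hcont.intervalIntegrable _ _)]
  have e1 : x - ((k:ℝ)+1)*x/((k:ℝ)+1) = 0 := by field_simp; ring
  have e2 : x - 0/((k:ℝ)+1) = x := by simp
  rw [e1, e2]
  simp only [exp_zero, sub_self, zero_pow (Nat.succ_ne_zero k), neg_zero, zero_mul, zero_sub]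
  have h3 : exp (-(((k:ℝ)+1)*x)) = (exp (-x))^(k+1) := by
    rw [← exp_nat_mul]; congr 1; push_cast; ring
  rw [h3]
  have h5 : (exp x - 1) * exp (-x) = 1 - exp (-x) := by
    rw [sub_mul, ← exp_add]; simp
  calc -(-(exp x - 1) ^ (k + 1) * exp (-x) ^ (k + 1))
      = ((exp x - 1) * exp (-x))^(k+1) := by rw [mul_pow]; ring
    _ = (1 - exp (-x))^(k+1) := by rw [h5]

lemma conv_lintegral (k : ℕ) (x : ℝ) :
    ∫⁻ z, exponentialPDF 1 z *
        ENNReal.ofReal (if 0 ≤ x - z/((k:ℝ)+1) then (1 - exp (-(x - z/((k:ℝ)+1))))^k else 0)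
      = ENNReal.ofReal (if 0 ≤ x then (1 - exp (-x))^(k+1) else 0) := by
  have hc0 : (0:ℝ) < (k:ℝ)+1 := by positivity
  have hiff : ∀ z : ℝ, (0 ≤ x - z/((k:ℝ)+1)) ↔ z ≤ ((k:ℝ)+1)*x := by
    intro z; rw [sub_nonneg, div_le_iff₀ hc0, mul_comm]
  set φ : ℝ → ℝ := fun z => exp (-z) * (1 - exp (-(x - z/((k:ℝ)+1))))^k with hφ
  set f : ℝ → ℝ := (Icc (0:ℝ) (((k:ℝ)+1)*x)).indicator φ with hf
  have hpt : ∀ z, exponentialPDF 1 z *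
      ENNReal.ofReal (if 0 ≤ x - z/((k:ℝ)+1) then (1 - exp (-(x - z/((k:ℝ)+1))))^k else 0)
      = ENNReal.ofReal (f z) := by
    intro z
    rcases lt_or_ge z 0 with hz | hz
    · rw [exponentialPDF_of_neg hz, zero_mul, hf,
        indicator_of_notMem (by simp [hz.not_ge]), ENNReal.ofReal_zero]
    · rw [exponentialPDF_of_nonneg hz]
      by_cases hxz : 0 ≤ x - z/((k:ℝ)+1)
      · have hmem : z ∈ Icc (0:ℝ) (((k:ℝ)+1)*x) := ⟨hz, (hiff z).mp hxz⟩
        rw [if_pos hxz, hf, indicator_of_mem hmem, hφ]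
        rw [← ENNReal.ofReal_mul (by positivity)]
        simp
      · have hnm : z ∉ Icc (0:ℝ) (((k:ℝ)+1)*x) := by
          simp only [mem_Icc, not_and, not_le]
          intro _
          exact lt_of_not_ge (fun h => hxz ((hiff z).mpr h))
        rw [if_neg hxz, ENNReal.ofReal_zero, mul_zero, hf,
          indicator_of_notMem hnm, ENNReal.ofReal_zero]
  simp_rw [hpt]
  have hφc : Continuous φ := by rw [hφ]; continuity
  have hfi : Integrable f := by
    rw [hf, integrable_indicator_iff measurableSet_Icc]
    exact hφc.integrableOn_Icc
  have hfnn : 0 ≤ᵐ[volume] f := by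
    refine ae_of_all _ (indicator_nonneg (fun z hz => ?_))
    have h1 : 0 ≤ x - z/((k:ℝ)+1) := (hiff z).mpr hz.2
    have h2 : exp (-(x - z/((k:ℝ)+1))) ≤ 1 := exp_le_one_iff.mpr (by linarith)
    exact mul_nonneg (exp_pos _).le (pow_nonneg (by linarith) k)
  rw [← ofReal_integral_eq_lintegral_ofReal hfi hfnn]
  congr 1
  rcases le_or_gt 0 x with hx | hx
  · rw [hf, integral_indicator measurableSet_Icc,
      integral_Icc_eq_integral_Ioc,
      ← intervalIntegral.integral_of_le (by positivity), if_pos hx]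
    exact key_integral k hx
  · rw [if_neg (not_le.mpr hx), hf, Icc_eq_empty (by nlinarith), indicator_empty,
      integral_zero]

lemma sum_cdf {Ω : Type*} [MeasurableSpace Ω] (μ : Measure Ω) [IsProbabilityMeasure μ] :
    ∀ (k : ℕ) (X : Fin k → Ω → ℝ), (∀ i, Measurable (X i)) →
      iIndepFun X μ →
      (∀ i, μ.map (X i) = expMeasure 1) →
      ∀ x : ℝ, μ {ω | ∑ i, X i ω / ((i:ℕ)+1) ≤ x}
        = ENNReal.ofReal (if 0 ≤ x then (1 - exp (-x))^k else 0) := by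
  intro k
  induction k with
  | zero =>
    intro X hX hind hexp x
    simp only [Finset.univ_eq_empty, Finset.sum_empty, pow_zero]
    by_cases h : (0:ℝ) ≤ x
    · rw [if_pos h]
      have : {ω : Ω | (0:ℝ) ≤ x} = univ := by ext ω; simp [h]
      rw [this, measure_univ, ENNReal.ofReal_one]
    · rw [if_neg h]
      have : {ω : Ω | (0:ℝ) ≤ x} = ∅ := by ext ω; simp [h]
      rw [this, measure_empty, ENNReal.ofReal_zero]
  | succ k ih =>
    intro X hX hind hexp x
    have hc0 : (0:ℝ) < (k:ℝ)+1 := by positivity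
    set Y : Fin (k+1) → Ω → ℝ := fun i ω => X i ω / ((i:ℕ)+1) with hY
    have hYmeas : ∀ i, Measurable (Y i) := fun i => (hX i).div_const _
    have hYind : iIndepFun Y μ :=
      hind.comp (fun i y => y / ((i:ℕ)+1)) (fun i => measurable_id.div_const _)
    set T : Ω → ℝ := fun ω => ∑ i : Fin k, Y (Fin.castSucc i) ω with hT
    have hTmeas : Measurable T :=
      Finset.measurable_sum _ (fun i _ => hYmeas _)
    -- T as a sum of Y's
    have hTY : T = ∑ j ∈ Finset.univ.map Fin.castSuccEmb, Y j := by
      funext ω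
      rw [Finset.sum_apply, Finset.sum_map]
      rfl
    have hlast_notmem : Fin.last k ∉ Finset.univ.map Fin.castSuccEmb := by
      simp only [Finset.mem_map, Finset.mem_univ, true_and]
      rintro ⟨i, hi⟩
      exact (Fin.castSucc_lt_last i).ne hi
    have hindTY : IndepFun T (Y (Fin.last k)) μ := by
      rw [hTY]
      exact hYind.indepFun_finsetSum_of_notMem hYmeas hlast_notmem
    -- IH for the first k variables
    have hXind' : iIndepFun
        (fun i : Fin k => X (Fin.castSucc i)) μ :=
      iIndepFun_comp_emb hind ⟨Fin.castSucc, Fin.castSucc_injective k⟩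
    have hIH := ih (fun i => X (Fin.castSucc i)) (fun i => hX _) hXind' (fun i => hexp _)
    have hlawT : ∀ t : ℝ, (μ.map T) (Iic t)
        = ENNReal.ofReal (if 0 ≤ t then (1 - exp (-t))^k else 0) := by
      intro t
      rw [Measure.map_apply hTmeas measurableSet_Iic]
      have hsetT : T ⁻¹' Iic t
          = {ω | ∑ i : Fin k, X (Fin.castSucc i) ω / ((i:ℕ)+1) ≤ t} := by
        ext ω
        simp [hT, hY, Fin.coe_castSucc]
      rw [hsetT]
      exact hIH t
    -- rewrite the event
    have hset : {ω | ∑ i : Fin (k+1), X i ω / ((i:ℕ)+1) ≤ x}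
        = (fun ω => (Y (Fin.last k) ω, T ω)) ⁻¹' {p : ℝ × ℝ | p.1 + p.2 ≤ x} := by
      ext ω
      simp only [mem_setOf_eq, mem_preimage]
      rw [Fin.sum_univ_castSucc]
      constructor
      · intro h; rw [add_comm]; convert h using 2 <;> simp [hY, hT, Fin.coe_castSucc]
      · intro h; rw [add_comm] at h; convert h using 2 <;> simp [hY, hT, Fin.coe_castSucc]
    rw [hset]
    have hYlmeas : Measurable (Y (Fin.last k)) := hYmeas _
    have hpairmeas : Measurable (fun ω => (Y (Fin.last k) ω, T ω)) :=
      hYlmeas.prodMk hTmeas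
    have hsmeas : MeasurableSet {p : ℝ × ℝ | p.1 + p.2 ≤ x} :=
      (isClosed_le (continuous_fst.add continuous_snd) continuous_const).measurableSet
    rw [← Measure.map_apply hpairmeas hsmeas]
    have hmapprod : μ.map (fun ω => (Y (Fin.last k) ω, T ω))
        = (μ.map (Y (Fin.last k))).prod (μ.map T) :=
      (indepFun_iff_map_prod_eq_prod_map_map hYlmeas.aemeasurable
        hTmeas.aemeasurable).mp hindTY.symm
    rw [hmapprod]
    have : IsFiniteMeasure (μ.map T) := Measure.isFiniteMeasure_map μ T
    rw [Measure.prod_apply hsmeas]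
    have hslice : ∀ y : ℝ, (Prod.mk y ⁻¹' {p : ℝ × ℝ | p.1 + p.2 ≤ x}) = Iic (x - y) := by
      intro y; ext t; simp [le_sub_iff_add_le, add_comm]
    calc ∫⁻ y, (μ.map T) (Prod.mk y ⁻¹' {p : ℝ × ℝ | p.1 + p.2 ≤ x}) ∂(μ.map (Y (Fin.last k)))
        = ∫⁻ y, ENNReal.ofReal (if 0 ≤ x - y then (1 - exp (-(x - y)))^k else 0)
            ∂(μ.map (Y (Fin.last k))) := by
          refine lintegral_congr fun y => ?_
          rw [hslice y, hlawT]
      _ = ENNReal.ofReal (if 0 ≤ x then (1 - exp (-x))^(k+1) else 0) := by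
          have hYl : μ.map (Y (Fin.last k))
              = (expMeasure 1).map (fun z => z / ((k:ℝ)+1)) := by
            have : Y (Fin.last k) = (fun z => z / ((k:ℝ)+1)) ∘ X (Fin.last k) := by
              funext ω; simp [hY, Fin.val_last]
            rw [this, ← Measure.map_map
              (by fun_prop : Measurable (fun z : ℝ => z / ((k:ℝ)+1))) (hX _), hexp]
          rw [hYl]
          have hg : Measurable (fun y : ℝ =>
              ENNReal.ofReal (if 0 ≤ x - y then (1 - exp (-(x - y)))^k else 0)) := by
            refine ENNReal.measurable_ofReal.comp ?_
            refine Measurable.ite ?_ ?_ measurable_const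
            · exact measurableSet_le measurable_const (measurable_const.sub measurable_id)
            · fun_prop
          rw [lintegral_map hg (by fun_prop : Measurable (fun z : ℝ => z / ((k:ℝ)+1)))]
          have hexpM : expMeasure 1 = volume.withDensity (exponentialPDF 1) := rfl
          rw [hexpM, lintegral_withDensity_eq_lintegral_mul _
            (by exact (measurable_exponentialPDFReal 1).ennreal_ofReal)
            (by exact hg.comp (by fun_prop))]
          simpa only [Pi.mul_apply] using conv_lintegral k x

/-- Arnold–Villasenor characterization, forward direction: for i.i.d. Exp(1) variables
`X 0, …, X (k-1)`, the maximum `max (X 0, …, X (k-1))` and the weighted sum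
`∑ j, X j / (j+1)` have the same distribution. -/
theorem arnold_villasenor_forward {Ω : Type*} [MeasurableSpace Ω] (μ : Measure Ω)
    [IsProbabilityMeasure μ] (k : ℕ) (hk : 0 < k)
    (X : Fin k → Ω → ℝ) (hX : ∀ i, Measurable (X i))
    (hind : iIndepFun X μ)
    (hexp : ∀ i, μ.map (X i) = expMeasure 1) :
    μ.map (fun ω => Finset.univ.sup' (Finset.univ_nonempty_iff.mpr ⟨⟨0, hk⟩⟩)
        (fun i => X i ω)) =
      μ.map (fun ω => ∑ i : Fin k, X i ω / ((i : ℕ) + 1)) := by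
  have hne : (Finset.univ : Finset (Fin k)).Nonempty :=
    Finset.univ_nonempty_iff.mpr ⟨⟨0, hk⟩⟩
  have hMmeas : Measurable (fun ω => Finset.univ.sup' hne (fun i => X i ω)) := by
    have h1 := Finset.measurable_sup' hne (fun i (_ : i ∈ Finset.univ) => hX i)
    have h2 : (Finset.univ.sup' hne X) = fun ω => Finset.univ.sup' hne (fun i => X i ω) := by
      funext ω
      exact Finset.sup'_apply hne X ω
    rwa [h2] at h1
  have hSmeas : Measurable (fun ω => ∑ i : Fin k, X i ω / ((i:ℕ)+1)) :=
    Finset.measurable_sum _ fun i _ => (hX i).div_const _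
  have hPM : IsProbabilityMeasure (μ.map (fun ω =>
      Finset.univ.sup' (Finset.univ_nonempty_iff.mpr ⟨⟨0, hk⟩⟩) (fun i => X i ω))) :=
    Measure.isProbabilityMeasure_map hMmeas.aemeasurable
  refine Measure.ext_of_Iic _ _ (fun x => ?_)
  rw [Measure.map_apply hMmeas measurableSet_Iic, Measure.map_apply hSmeas measurableSet_Iic]
  have hmax : (fun ω => Finset.univ.sup' hne (fun i => X i ω)) ⁻¹' Iic x
      = ⋂ i, X i ⁻¹' Iic x := by
    ext ω
    simp [Finset.sup'_le_iff]
  rw [hmax, hind.meas_iInter (fun i => ⟨Iic x, measurableSet_Iic, rfl⟩)]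
  have hfac : ∀ i : Fin k, μ (X i ⁻¹' Iic x)
      = ENNReal.ofReal (if 0 ≤ x then 1 - exp (-x) else 0) := by
    intro i
    rw [← Measure.map_apply (hX i) measurableSet_Iic, hexp i, expMeasure_Iic one_pos]
    simp
  simp_rw [hfac]
  rw [Finset.prod_const, Finset.card_univ, Fintype.card_fin]
  have hsum := sum_cdf μ k X hX hind hexp x
  have hpre : (fun ω => ∑ i : Fin k, X i ω / ((i:ℕ)+1)) ⁻¹' Iic x
      = {ω | ∑ i : Fin k, X i ω / ((i:ℕ)+1) ≤ x} := rfl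
  rw [hpre, hsum]
  by_cases h : 0 ≤ x
  · rw [if_pos h, if_pos h,
      ← ENNReal.ofReal_pow (by linarith [exp_le_one_iff.mpr (by linarith : -x ≤ 0)])]
  · rw [if_neg h, if_neg h, ENNReal.ofReal_zero, zero_pow hk.ne']
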